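/- arXiv:2503.04651 — 2 statements merged into one kernel-verified Lean document; each statement's English description precedes it below -/
import Mathlib

section
/- For every real number p, the function t ↦ e^{itp}/(e^{πt} + e^{-πt}) is (Bochner/Lebesgue) integrable on ℝ, and ∫_ℝ e^{itp}/(e^{πt} + e^{-πt}) dt = 1/(e^{p/2} + e^{-p/2}). -/
open MeasureTheory Real Set

noncomputable def stmtF (t : ℝ) : ℝ := (1 + Real.exp (-(2 * Real.pi * t)))⁻¹
noncomputable def stmtF' (t : ℝ) : ℝ :=
  2 * Real.pi * Real.exp (-(2 * Real.pi * t)) / (1 + Real.exp (-(2 * Real.pi * t))) ^ 2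

lemma stmtF_hasDeriv (t : ℝ) : HasDerivAt stmtF (stmtF' t) t := by
  have h1 : HasDerivAt (fun t : ℝ => -(2 * Real.pi * t)) (-(2 * Real.pi)) t := by
    exact ((hasDerivAt_id t).const_mul (2 * Real.pi)).neg.congr_deriv (by simp)
  have h2 : HasDerivAt (fun t : ℝ => 1 + Real.exp (-(2 * Real.pi * t)))
      (Real.exp (-(2 * Real.pi * t)) * -(2 * Real.pi)) t :=
    (h1.exp).const_add 1
  have h3 := h2.inv (by positivity)
  refine h3.congr_deriv ?_
  unfold stmtF'
  field_simp

lemma stmtF_pos (t : ℝ) : 0 < stmtF t := by unfold stmtF; positivity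

lemma stmtF_lt_one (t : ℝ) : stmtF t < 1 := by
  unfold stmtF
  rw [inv_lt_one_iff₀]
  right
  nlinarith [Real.exp_pos (-(2 * Real.pi * t))]

lemma stmtF_strictMono : StrictMono stmtF := by
  intro s t hst
  unfold stmtF
  have h : Real.exp (-(2 * Real.pi * t)) < Real.exp (-(2 * Real.pi * s)) := by
    apply Real.exp_lt_exp.mpr
    nlinarith [Real.pi_pos]
  have h0 : (0:ℝ) < 1 + Real.exp (-(2 * Real.pi * t)) := by positivity
  apply inv_strictAnti₀ (by positivity)
  linarith

lemma stmtF_range : stmtF '' univ = Ioo 0 1 := by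
  apply Subset.antisymm
  · rintro _ ⟨t, -, rfl⟩
    exact ⟨stmtF_pos t, stmtF_lt_one t⟩
  · rintro y ⟨hy0, hy1⟩
    refine ⟨Real.log (y / (1 - y)) / (2 * Real.pi), trivial, ?_⟩
    unfold stmtF
    have hπ : (2 * Real.pi) ≠ 0 := by positivity
    have h1 : -(2 * Real.pi * (Real.log (y / (1 - y)) / (2 * Real.pi)))
        = Real.log ((1 - y) / y) := by
      rw [mul_div_cancel₀ _ hπ]
      rw [← Real.log_inv]
      congr 1
      field_simp
    rw [h1, Real.exp_log (by apply div_pos <;> linarith)]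
    field_simp
    ring

noncomputable def stmtA (p : ℝ) : ℂ := 1 / 2 + Complex.I * ((p / (2 * Real.pi) : ℝ) : ℂ)

noncomputable def stmtG (p : ℝ) (x : ℝ) : ℂ :=
  (x : ℂ) ^ (stmtA p - 1) * ((1 - x : ℝ) : ℂ) ^ (1 - stmtA p - 1) / (2 * Real.pi)

lemma cpow_real_pos {r : ℝ} (hr : 0 < r) (w : ℂ) :
    (r : ℂ) ^ w = Complex.exp ((Real.log r : ℂ) * w) := by
  rw [Complex.cpow_def_of_ne_zero (by exact_mod_cast hr.ne'), Complex.ofReal_log hr.le]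

lemma stmt_key (p t : ℝ) :
    |stmtF' t| • stmtG p (stmtF t)
      = Complex.exp (Complex.I * t * p) /
        ((Real.exp (Real.pi * t) + Real.exp (-(Real.pi * t)) : ℝ) : ℂ) := by
  set E : ℝ := Real.exp (-(2 * Real.pi * t)) with hE
  have hEpos : 0 < E := Real.exp_pos _
  have hx : stmtF t = (1 + E)⁻¹ := rfl
  have h1x : (1 - stmtF t : ℝ) = E / (1 + E) := by
    rw [hx]; field_simp; ring
  have hL1 : Real.log (stmtF t) = -Real.log (1 + E) := by
    rw [hx, Real.log_inv]
  have hL2 : Real.log (1 - stmtF t) = -(2 * Real.pi * t) - Real.log (1 + E) := by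
    rw [h1x, Real.log_div hEpos.ne' (by positivity), hE, Real.log_exp]
  set L1 : ℝ := Real.log (1 + E) with hL1def
  have hexp : ((Real.log (stmtF t) : ℝ) : ℂ) * (stmtA p - 1)
      + ((Real.log (1 - stmtF t) : ℝ) : ℂ) * (1 - stmtA p - 1)
      = ((L1 + Real.pi * t : ℝ) : ℂ) + Complex.I * t * p := by
    rw [hL1, hL2]
    unfold stmtA
    have hπ : (Real.pi : ℂ) ≠ 0 := by exact_mod_cast Real.pi_ne_zero
    push_cast
    field_simp
    ring
  rw [stmtG, cpow_real_pos (stmtF_pos t), cpow_real_pos (by rw [h1x]; positivity),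
    ← Complex.exp_add, hexp, Complex.exp_add]
  have habs : |stmtF' t| = 2 * Real.pi * E / (1 + E) ^ 2 := by
    rw [abs_of_nonneg]; · rfl
    unfold stmtF'; positivity
  have hreal : |stmtF' t| * Real.exp (L1 + Real.pi * t) / (2 * Real.pi)
      = 1 / (Real.exp (Real.pi * t) + Real.exp (-(Real.pi * t))) := by
    rw [habs, Real.exp_add, hL1def, Real.exp_log (by positivity)]
    have huv : Real.exp (Real.pi * t) * Real.exp (-(Real.pi * t)) = 1 := by
      rw [← Real.exp_add]; simp
    have hEv : E = Real.exp (-(Real.pi * t)) * Real.exp (-(Real.pi * t)) := by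
      rw [← Real.exp_add, hE]; ring_nf
    rw [hEv]
    have h1 : (0:ℝ) < Real.exp (Real.pi * t) + Real.exp (-(Real.pi * t)) := by positivity
    field_simp
    linear_combination (Real.exp (Real.pi * t) * Real.exp (-(Real.pi * t)) + 1
        + Real.exp (-(Real.pi * t)) * Real.exp (-(Real.pi * t))) * huv
  calc |stmtF' t| • (Complex.exp ((L1 + Real.pi * t : ℝ) : ℂ)
          * Complex.exp (Complex.I * t * p) / (2 * Real.pi))
      = ((|stmtF' t| * Real.exp (L1 + Real.pi * t) / (2 * Real.pi) : ℝ) : ℂ)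
          * Complex.exp (Complex.I * t * p) := by
        rw [← Complex.ofReal_exp, Complex.real_smul]; push_cast; ring
    _ = _ := by rw [hreal]; push_cast; ring

lemma stmtA_re (p : ℝ) : (stmtA p).re = 1 / 2 := by
  rw [stmtA]
  rw [Complex.add_re, Complex.mul_re, Complex.I_re, Complex.I_im, Complex.ofReal_im,
    Complex.ofReal_re]
  norm_num

lemma stmtG_integrable (p : ℝ) : IntegrableOn (stmtG p) (Ioo 0 1) := by
  have h := Complex.betaIntegral_convergent (u := stmtA p) (v := 1 - stmtA p)
    (by rw [stmtA_re]; norm_num) (by simp [stmtA_re, Complex.sub_re]; norm_num)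
  have h2 : IntegrableOn (fun x : ℝ =>
      (x : ℂ) ^ (stmtA p - 1) * ((1 - x : ℝ) : ℂ) ^ (1 - stmtA p - 1)) (Ioc 0 1) := by
    have := h.1
    simpa [Complex.ofReal_sub, Complex.ofReal_one] using this
  exact ((h2.mono_set Ioo_subset_Ioc_self).div_const _)

/-- For every real `p`, the function `t ↦ exp(i t p) / (exp(π t) + exp(-π t))` is
integrable on `ℝ` and its integral equals `1 / (exp(p/2) + exp(-p/2))`. -/
theorem stmt0 (p : ℝ) :
    Integrable (fun t : ℝ =>
      Complex.exp (Complex.I * t * p) /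
        ((Real.exp (Real.pi * t) + Real.exp (-(Real.pi * t)) : ℝ) : ℂ)) ∧
    ∫ t : ℝ, Complex.exp (Complex.I * t * p) /
        ((Real.exp (Real.pi * t) + Real.exp (-(Real.pi * t)) : ℝ) : ℂ)
      = 1 / ((Real.exp (p / 2) + Real.exp (-(p / 2)) : ℝ) : ℂ) := by
  have hre1 : 0 < (stmtA p).re := by rw [stmtA_re]; norm_num
  have hre2 : 0 < (1 - stmtA p).re := by
    simp only [Complex.sub_re, Complex.one_re, stmtA_re]; norm_num
  have hderiv : ∀ x ∈ (Set.univ : Set ℝ), HasDerivWithinAt stmtF (stmtF' x) Set.univ x :=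
    fun x _ => (stmtF_hasDeriv x).hasDerivWithinAt
  have hinj : Set.InjOn stmtF Set.univ := stmtF_strictMono.injective.injOn
  have hint : Integrable (fun t : ℝ =>
      Complex.exp (Complex.I * t * p) /
        ((Real.exp (Real.pi * t) + Real.exp (-(Real.pi * t)) : ℝ) : ℂ)) := by
    have h := (MeasureTheory.integrableOn_image_iff_integrableOn_abs_deriv_smul
      MeasurableSet.univ hderiv hinj (stmtG p)).mp
      (by rw [stmtF_range]; exact stmtG_integrable p)
    rw [integrableOn_univ] at h
    simpa only [stmt_key] using h
  refine ⟨hint, ?_⟩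
  have hCOV := MeasureTheory.integral_image_eq_integral_abs_deriv_smul
      MeasurableSet.univ hderiv hinj (stmtG p)
  rw [stmtF_range, Measure.restrict_univ] at hCOV
  simp only [stmt_key] at hCOV
  rw [← hCOV]
  have hbeta : ∫ x in Set.Ioo (0:ℝ) 1, stmtG p x
      = Complex.betaIntegral (stmtA p) (1 - stmtA p) / (2 * Real.pi) := by
    rw [← MeasureTheory.integral_Ioc_eq_integral_Ioo,
        ← intervalIntegral.integral_of_le zero_le_one,
        Complex.betaIntegral, ← intervalIntegral.integral_div]
    apply intervalIntegral.integral_congr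
    intro x _
    unfold stmtG
    push_cast
    ring
  rw [hbeta]
  have hGamma : Complex.betaIntegral (stmtA p) (1 - stmtA p)
      = (Real.pi : ℂ) / Complex.sin (Real.pi * stmtA p) := by
    have h1 := Complex.Gamma_mul_Gamma_eq_betaIntegral hre1 hre2
    rw [show stmtA p + (1 - stmtA p) = 1 by ring, Complex.Gamma_one, one_mul] at h1
    rw [← h1, Complex.Gamma_mul_Gamma_one_sub]
  have hsin : Complex.sin (Real.pi * stmtA p) = ((Real.cosh (p / 2) : ℝ) : ℂ) := by
    have harg : (Real.pi : ℂ) * stmtA p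
        = (Real.pi : ℂ) / 2 + ((p / 2 : ℝ) : ℂ) * Complex.I := by
      rw [stmtA]
      have hπ : (Real.pi : ℂ) ≠ 0 := by exact_mod_cast Real.pi_ne_zero
      push_cast
      field_simp
    rw [harg, Complex.sin_add, Complex.sin_pi_div_two, Complex.cos_pi_div_two,
      Complex.cos_mul_I, Complex.ofReal_cosh]
    ring
  rw [hGamma, hsin, Real.cosh_eq]
  have hπ : (Real.pi : ℂ) ≠ 0 := by exact_mod_cast Real.pi_ne_zero
  have hC : (Real.exp (p / 2) + Real.exp (-(p / 2))) ≠ 0 := by positivity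
  have hC' : ((Real.exp (p / 2) + Real.exp (-(p / 2)) : ℝ) : ℂ) ≠ 0 := by
    exact_mod_cast hC
  rw [show ((((Real.exp (p / 2) + Real.exp (-(p / 2))) / 2 : ℝ)) : ℂ)
      = ((Real.exp (p / 2) + Real.exp (-(p / 2)) : ℝ) : ℂ) / 2 by push_cast; ring]
  set C : ℂ := ((Real.exp (p / 2) + Real.exp (-(p / 2)) : ℝ) : ℂ) with hCdef
  field_simp
end

section
/- Let H be a complex Hilbert space, let A and B be bounded, self-adjoint, positive operators on H, let λ > 0 and ξ ∈ H. Then Re⟨ξ, ((B+λ)^{-1} − (A+λ)^{-1}) ξ⟩ ≥ Re⟨(A+λ)^{-1} ξ, (A − B)(A+λ)^{-1} ξ⟩. -/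
open scoped InnerProductSpace NNReal

section Stmt6Aux

variable {H : Type*} [NormedAddCommGroup H] [InnerProductSpace ℂ H] [CompleteSpace H]

lemma stmt6_smul_one_isPositive {l : ℝ} (hl : 0 ≤ l) :
    ((l : ℂ) • 1 : H →L[ℂ] H).IsPositive := by
  constructor
  · intro x y
    show ⟪(l : ℂ) • x, y⟫_ℂ = ⟪x, (l : ℂ) • y⟫_ℂ
    rw [inner_smul_left, inner_smul_right, Complex.conj_ofReal]
  · intro x
    simp only [ContinuousLinearMap.reApplyInnerSelf, ContinuousLinearMap.smul_apply,
      ContinuousLinearMap.one_apply, inner_smul_left, Complex.conj_ofReal]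
    simp only [RCLike.mul_re, RCLike.ofReal_re, RCLike.ofReal_im, Complex.ofReal_re,
      Complex.ofReal_im, inner_self_eq_norm_sq, inner_self_im, zero_mul, mul_zero, sub_zero]
    exact mul_nonneg hl (sq_nonneg _)

lemma stmt6_isUnit {T : H →L[ℂ] H} (hT : T.IsPositive) {l : ℝ} (hl : 0 < l) :
    IsUnit (T + (l : ℂ) • 1) := by
  refine ContinuousLinearMap.isUnit_of_forall_le_norm_inner_map _ (c := ⟨l, hl.le⟩) hl ?_
  intro x
  have h1 : ‖x‖ ^ 2 * l = (⟪((l : ℂ) • 1 : H →L[ℂ] H) x, x⟫_ℂ).re := by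
    simp only [ContinuousLinearMap.smul_apply, ContinuousLinearMap.one_apply, inner_smul_left,
      Complex.conj_ofReal]
    rw [← RCLike.re_to_complex]
    simp only [RCLike.mul_re, RCLike.ofReal_re, RCLike.ofReal_im, Complex.ofReal_re,
      Complex.ofReal_im, inner_self_eq_norm_sq, inner_self_im, zero_mul, mul_zero, sub_zero]
    rw [RCLike.re_to_complex, Complex.ofReal_re]
    ring
  have h2 : (⟪((l : ℂ) • 1 : H →L[ℂ] H) x, x⟫_ℂ).re
      ≤ (⟪(T + (l : ℂ) • 1) x, x⟫_ℂ).re := by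
    simp only [ContinuousLinearMap.add_apply, inner_add_left, Complex.add_re]
    have h3 := hT.inner_nonneg_left x
    replace h3 := (Complex.nonneg_iff.mp h3).1
    linarith
  calc ‖x‖ ^ 2 * (⟨l, hl.le⟩ : ℝ≥0) = ‖x‖ ^ 2 * l := rfl
    _ ≤ (⟪(T + (l : ℂ) • 1) x, x⟫_ℂ).re := by rw [h1]; exact h2
    _ ≤ ‖⟪(T + (l : ℂ) • 1) x, x⟫_ℂ‖ := Complex.re_le_norm _

end Stmt6Aux

/-- For bounded, self-adjoint, positive operators `A`, `B` on a complex Hilbert space,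
`λ > 0` and `ξ ∈ H`:
`Re⟨ξ, ((B+λ)⁻¹ − (A+λ)⁻¹)ξ⟩ ≥ Re⟨(A+λ)⁻¹ξ, (A − B)(A+λ)⁻¹ξ⟩`. -/
theorem stmt6 {H : Type*} [NormedAddCommGroup H] [InnerProductSpace ℂ H] [CompleteSpace H]
    (A B : H →L[ℂ] H) (hA : A.IsPositive) (hB : B.IsPositive)
    (l : ℝ) (hl : 0 < l) (ξ : H) :
    (⟪ξ, (Ring.inverse (B + (l : ℂ) • 1) - Ring.inverse (A + (l : ℂ) • 1)) ξ⟫_ℂ).re ≥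
      (⟪Ring.inverse (A + (l : ℂ) • 1) ξ,
        (A - B) (Ring.inverse (A + (l : ℂ) • 1) ξ)⟫_ℂ).re := by
  set SA := A + (l : ℂ) • 1 with hSAdef
  set SB := B + (l : ℂ) • 1 with hSBdef
  have hSA_pos : SA.IsPositive := hA.add (stmt6_smul_one_isPositive hl.le)
  have hSB_pos : SB.IsPositive := hB.add (stmt6_smul_one_isPositive hl.le)
  have hUA : IsUnit SA := stmt6_isUnit hA hl
  have hUB : IsUnit SB := stmt6_isUnit hB hl
  set RA := Ring.inverse SA with hRAdef
  set RB := Ring.inverse SB with hRBdef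
  have hRA1 : RA * SA = 1 := Ring.inverse_mul_cancel _ hUA
  have hSA1 : SA * RA = 1 := Ring.mul_inverse_cancel _ hUA
  have hRB1 : RB * SB = 1 := Ring.inverse_mul_cancel _ hUB
  have hSB1 : SB * RB = 1 := Ring.mul_inverse_cancel _ hUB
  have hABsub : A - B = SA - SB := by rw [hSAdef, hSBdef]; abel
  have hDiff : RB - RA = RA * (A - B) * RB := by
    rw [hABsub, mul_sub, sub_mul, hRA1, one_mul, mul_assoc, hSB1, mul_one]
  have hDiff2 : RB - RA = RB * (A - B) * RA := by
    rw [hABsub, mul_sub, sub_mul, mul_assoc, hSA1, mul_one, hRB1, one_mul]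
  have hRB_eq : RB = RA + RB * (A - B) * RA := by rw [← hDiff2]; abel
  have key : RB - RA = RA * (A - B) * RA + RA * (A - B) * (RB * (A - B) * RA) := by
    calc RB - RA = RA * (A - B) * (RA + RB * (A - B) * RA) := by rw [← hRB_eq, hDiff]
      _ = RA * (A - B) * RA + RA * (A - B) * (RB * (A - B) * RA) := by rw [mul_add]
  have hRA_sa : IsSelfAdjoint RA := by
    rw [hRAdef, IsSelfAdjoint, ← Ring.inverse_star, hSA_pos.isSelfAdjoint]
  have hD_sa : IsSelfAdjoint (A - B) := hA.isSelfAdjoint.sub hB.isSelfAdjoint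
  have hRA_adj : ContinuousLinearMap.adjoint RA = RA :=
    ContinuousLinearMap.isSelfAdjoint_iff'.mp hRA_sa
  have hD_adj : ContinuousLinearMap.adjoint (A - B) = A - B :=
    ContinuousLinearMap.isSelfAdjoint_iff'.mp hD_sa
  have moveRA : ∀ x y : H, ⟪x, RA y⟫_ℂ = ⟪RA x, y⟫_ℂ := fun x y => by
    conv_lhs => rw [← hRA_adj]
    exact ContinuousLinearMap.adjoint_inner_right _ _ _
  have moveD : ∀ x y : H, ⟪x, (A - B) y⟫_ℂ = ⟪(A - B) x, y⟫_ℂ := fun x y => by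
    conv_lhs => rw [← hD_adj]
    exact ContinuousLinearMap.adjoint_inner_right _ _ _
  rw [key]
  have happ : (RA * (A - B) * RA + RA * (A - B) * (RB * (A - B) * RA)) ξ
      = RA ((A - B) (RA ξ)) + RA ((A - B) (RB ((A - B) (RA ξ)))) := rfl
  rw [happ, inner_add_right, Complex.add_re]
  have hterm1 : (⟪ξ, RA ((A - B) (RA ξ))⟫_ℂ).re
      = (⟪RA ξ, (A - B) (RA ξ)⟫_ℂ).re := by rw [moveRA]
  have hterm2 : 0 ≤ (⟪ξ, RA ((A - B) (RB ((A - B) (RA ξ))))⟫_ℂ).re := by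
    set η := (A - B) (RA ξ) with hη
    have : ⟪ξ, RA ((A - B) (RB η))⟫_ℂ = ⟪η, RB η⟫_ℂ := by
      rw [moveRA, moveD]
    rw [this]
    have hw : η = SB (RB η) := by
      have := congrArg (fun f : H →L[ℂ] H => f η) hSB1
      simpa using this.symm
    calc (0 : ℝ) ≤ (⟪SB (RB η), RB η⟫_ℂ).re := (Complex.nonneg_iff.mp (hSB_pos.inner_nonneg_left _)).1
      _ = (⟪η, RB η⟫_ℂ).re := by rw [← hw]
  rw [hterm1]
  linarith
end
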